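/- Fix z ∈ [0,1]. For even n ≥ 4 set Γ_n(z) = ∏_{k=1}^{n/2−1} (1 + z^(2^k))^(3·2^(n−2k−1)) · (1 + z^(2^(n/2)))³, and for odd n ≥ 5 set Γ_n(z) = ∏_{k=1}^{(n−1)/2−1} (1 + z^(2^k))^(3·2^(n−2k−1)) · (1 + z^(2^((n−1)/2)))⁴ · (1 + z^(2^((n+1)/2))). Then the series ∑_{k=1}^∞ 4^(−k)·log(1 + z^(2^k)) converges, and (log Γ_n(z))/2^n converges as n → ∞ to (3/2)·∑_{k=1}^∞ 4^(−k)·log(1 + z^(2^k)). -/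

import Mathlib

open Filter

/-- Generating function of closed polygons of the `n`-th Schreier graph of the
Basilica group, evaluated at `z`. -/
noncomputable def basilicaGamma (n : ℕ) (z : ℝ) : ℝ :=
  if Even n then
    (∏ k ∈ Finset.Icc 1 (n / 2 - 1), (1 + z ^ (2 ^ k)) ^ (3 * 2 ^ (n - 2 * k - 1))) *
      (1 + z ^ (2 ^ (n / 2))) ^ 3
  else
    (∏ k ∈ Finset.Icc 1 ((n - 1) / 2 - 1), (1 + z ^ (2 ^ k)) ^ (3 * 2 ^ (n - 2 * k - 1))) *
      (1 + z ^ (2 ^ ((n - 1) / 2))) ^ 4 * (1 + z ^ (2 ^ ((n + 1) / 2)))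

private def bm (n : ℕ) : ℕ := if Even n then n / 2 - 1 else (n - 1) / 2 - 1

private noncomputable def br (z : ℝ) (n : ℕ) : ℝ :=
  if Even n then 3 * Real.log (1 + z ^ 2 ^ (n / 2)) / 2 ^ n
  else (4 * Real.log (1 + z ^ 2 ^ ((n - 1) / 2)) + Real.log (1 + z ^ 2 ^ ((n + 1) / 2))) / 2 ^ n

private lemma bterm (n k : ℕ) (h : 2 * k + 1 ≤ n) (x : ℝ) :
    ((3 * 2 ^ (n - 2 * k - 1) : ℕ) : ℝ) * x / 2 ^ n = 3 / 2 * (x / 4 ^ k) := by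
  have h4 : (4 : ℝ) ^ k = 2 ^ (2 * k) := by
    rw [show (4 : ℝ) = 2 ^ 2 by norm_num, ← pow_mul]
  have h2 : (2 : ℝ) ^ n = 2 ^ (n - 2 * k - 1) * (2 * 2 ^ (2 * k)) := by
    rw [show 2 * (2 : ℝ) ^ (2 * k) = 2 ^ (2 * k + 1) by rw [pow_succ]; ring, ← pow_add]
    congr 1; omega
  have hne1 : (2 : ℝ) ^ (n - 2 * k - 1) ≠ 0 := by positivity
  have hne2 : (2 : ℝ) ^ (2 * k) ≠ 0 := by positivity
  push_cast
  rw [h4, h2]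
  field_simp

private lemma bkey (z : ℝ) (hz0 : 0 ≤ z) {n : ℕ} (hn : 4 ≤ n) :
    Real.log (basilicaGamma n z) / 2 ^ n =
      3 / 2 * (∑ k ∈ Finset.range (bm n), Real.log (1 + z ^ 2 ^ (k + 1)) / 4 ^ (k + 1)) +
        br z n := by
  have hpos : ∀ p : ℕ, (0 : ℝ) < 1 + z ^ p := fun p => by nlinarith [pow_nonneg hz0 p]
  rcases Nat.even_or_odd n with he | ho
  · have hEv : Even n := he
    obtain ⟨t, ht⟩ := he
    rw [basilicaGamma, if_pos hEv, bm, if_pos hEv, br, if_pos hEv]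
    have hA : (0 : ℝ) < ∏ k ∈ Finset.Icc 1 (n / 2 - 1),
        (1 + z ^ (2 ^ k)) ^ (3 * 2 ^ (n - 2 * k - 1)) :=
      Finset.prod_pos fun i _ => pow_pos (hpos _) _
    have hB : (0 : ℝ) < (1 + z ^ (2 ^ (n / 2))) ^ 3 := pow_pos (hpos _) _
    rw [Real.log_mul hA.ne' hB.ne',
      Real.log_prod (fun i _ => (pow_pos (hpos _) _).ne')]
    simp only [Real.log_pow]
    rw [add_div, Finset.sum_div]
    have hsum : ∑ k ∈ Finset.Icc 1 (n / 2 - 1),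
        ((3 * 2 ^ (n - 2 * k - 1) : ℕ) : ℝ) * Real.log (1 + z ^ 2 ^ k) / 2 ^ n =
        3 / 2 * ∑ k ∈ Finset.range (n / 2 - 1),
          Real.log (1 + z ^ 2 ^ (k + 1)) / 4 ^ (k + 1) := by
      rw [Finset.mul_sum, ← Finset.Ico_add_one_right_eq_Icc, Finset.sum_Ico_eq_sum_range]
      apply Finset.sum_congr rfl
      intro i hi
      have hi' := Finset.mem_range.mp hi
      rw [bterm n (1 + i) (by omega), Nat.add_comm 1 i]
    rw [hsum]
    push_cast
    ring
  · have hOd : ¬ Even n := Nat.not_even_iff_odd.mpr ho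
    obtain ⟨t, ht⟩ := ho
    rw [basilicaGamma, if_neg hOd, bm, if_neg hOd, br, if_neg hOd]
    have hA : (0 : ℝ) < ∏ k ∈ Finset.Icc 1 ((n - 1) / 2 - 1),
        (1 + z ^ (2 ^ k)) ^ (3 * 2 ^ (n - 2 * k - 1)) :=
      Finset.prod_pos fun i _ => pow_pos (hpos _) _
    have hB : (0 : ℝ) < (1 + z ^ (2 ^ ((n - 1) / 2))) ^ 4 := pow_pos (hpos _) _
    have hC : (0 : ℝ) < 1 + z ^ (2 ^ ((n + 1) / 2)) := hpos _
    rw [Real.log_mul (mul_pos hA hB).ne' hC.ne', Real.log_mul hA.ne' hB.ne',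
      Real.log_prod (fun i _ => (pow_pos (hpos _) _).ne')]
    simp only [Real.log_pow]
    rw [add_div, add_div, Finset.sum_div]
    have hsum : ∑ k ∈ Finset.Icc 1 ((n - 1) / 2 - 1),
        ((3 * 2 ^ (n - 2 * k - 1) : ℕ) : ℝ) * Real.log (1 + z ^ 2 ^ k) / 2 ^ n =
        3 / 2 * ∑ k ∈ Finset.range ((n - 1) / 2 - 1),
          Real.log (1 + z ^ 2 ^ (k + 1)) / 4 ^ (k + 1) := by
      rw [Finset.mul_sum, ← Finset.Ico_add_one_right_eq_Icc, Finset.sum_Ico_eq_sum_range]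
      apply Finset.sum_congr rfl
      intro i hi
      have hi' := Finset.mem_range.mp hi
      rw [bterm n (1 + i) (by omega), Nat.add_comm 1 i]
    rw [hsum]
    push_cast
    ring

theorem basilica_thermodynamic_limit (z : ℝ) (hz : z ∈ Set.Icc (0 : ℝ) 1) :
    Summable (fun k : ℕ => Real.log (1 + z ^ (2 ^ (k + 1))) / 4 ^ (k + 1)) ∧
    Tendsto (fun n : ℕ => Real.log (basilicaGamma n z) / 2 ^ n) atTop
      (nhds ((3 / 2) * ∑' k : ℕ, Real.log (1 + z ^ (2 ^ (k + 1))) / 4 ^ (k + 1))) := by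
  obtain ⟨hz0, hz1⟩ := hz
  have hpow0 : ∀ p : ℕ, 0 ≤ z ^ p := fun p => pow_nonneg hz0 p
  have hpow1 : ∀ p : ℕ, z ^ p ≤ 1 := fun p => pow_le_one₀ hz0 hz1
  have hlog2 : (0 : ℝ) ≤ Real.log 2 := Real.log_nonneg (by norm_num)
  have hanng : ∀ k : ℕ, 0 ≤ Real.log (1 + z ^ 2 ^ k) :=
    fun k => Real.log_nonneg (by linarith [hpow0 (2 ^ k)])
  have haub : ∀ k : ℕ, Real.log (1 + z ^ 2 ^ k) ≤ Real.log 2 :=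
    fun k => Real.log_le_log (by linarith [hpow0 (2 ^ k)]) (by linarith [hpow1 (2 ^ k)])
  -- summability
  have hsummable : Summable (fun k : ℕ => Real.log (1 + z ^ (2 ^ (k + 1))) / 4 ^ (k + 1)) := by
    refine Summable.of_nonneg_of_le (fun k => div_nonneg (hanng _) (by positivity)) (fun k => ?_)
      ((summable_geometric_of_lt_one (by norm_num : (0:ℝ) ≤ 1/4)
        (by norm_num : (1/4:ℝ) < 1)).mul_left (Real.log 2))
    have h1 : Real.log (1 + z ^ 2 ^ (k + 1)) / 4 ^ (k + 1) ≤ Real.log 2 / 4 ^ k := by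
      apply div_le_div₀ (by exact hlog2) (haub _) (by positivity)
      exact pow_le_pow_right₀ (by norm_num) (by omega)
    calc Real.log (1 + z ^ 2 ^ (k + 1)) / 4 ^ (k + 1) ≤ Real.log 2 / 4 ^ k := h1
      _ = Real.log 2 * (1 / 4 : ℝ) ^ k := by rw [div_pow, one_pow, div_eq_mul_inv, div_eq_mul_inv, one_mul]
  refine ⟨hsummable, ?_⟩
  set S : ℝ := ∑' k : ℕ, Real.log (1 + z ^ (2 ^ (k + 1))) / 4 ^ (k + 1) with hS
  have hP : Tendsto (fun m : ℕ => ∑ k ∈ Finset.range m,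
      Real.log (1 + z ^ (2 ^ (k + 1))) / 4 ^ (k + 1)) atTop (nhds S) :=
    hsummable.hasSum.tendsto_sum_nat
  have hm : Tendsto bm atTop atTop := by
    apply tendsto_atTop_atTop.2
    intro b
    refine ⟨2 * b + 4, fun n hn => ?_⟩
    rw [bm]; split_ifs with h
    · omega
    · omega
  have h1 : Tendsto (fun n : ℕ => 3 / 2 * ∑ k ∈ Finset.range (bm n),
      Real.log (1 + z ^ (2 ^ (k + 1))) / 4 ^ (k + 1)) atTop (nhds (3 / 2 * S)) :=
    (hP.comp hm).const_mul _
  have hrub : ∀ n : ℕ, br z n ≤ 5 * Real.log 2 / 2 ^ n := by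
    intro n
    rw [br]; split_ifs with h
    · gcongr ?_ / _
      linarith [haub (n / 2)]
    · gcongr ?_ / _
      linarith [haub ((n - 1) / 2), haub ((n + 1) / 2)]
  have hrnn : ∀ n : ℕ, 0 ≤ br z n := by
    intro n
    rw [br]; split_ifs with h
    · have := hanng (n / 2); positivity
    · have := hanng ((n - 1) / 2); have := hanng ((n + 1) / 2); positivity
  have hgeo : Tendsto (fun n : ℕ => 5 * Real.log 2 / 2 ^ n) atTop (nhds 0) := by
    have : Tendsto (fun n : ℕ => (5 * Real.log 2) * (1 / 2 : ℝ) ^ n) atTop (nhds 0) := by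
      simpa using
        (tendsto_pow_atTop_nhds_zero_of_lt_one (by norm_num : (0:ℝ) ≤ 1/2)
          (by norm_num : (1/2:ℝ) < 1)).const_mul (5 * Real.log 2)
    refine this.congr fun n => ?_
    rw [div_pow, one_pow, div_eq_mul_inv, div_eq_mul_inv, mul_assoc]; ring
  have hr : Tendsto (fun n : ℕ => br z n) atTop (nhds 0) :=
    squeeze_zero hrnn hrub hgeo
  have hmain : Tendsto (fun n : ℕ => 3 / 2 * (∑ k ∈ Finset.range (bm n),
      Real.log (1 + z ^ (2 ^ (k + 1))) / 4 ^ (k + 1)) + br z n) atTop (nhds (3 / 2 * S)) := by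
    simpa using h1.add hr
  refine hmain.congr' ?_
  filter_upwards [eventually_ge_atTop 4] with n hn
  exact (bkey z hz0 hn).symm
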